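/- Let G be a finite simple graph on n ≥ 1 vertices that admits an isolate secure dominating set. Then γ_{0s}(G) = 1 if and only if G is the complete graph K_n (i.e., every two distinct vertices of G are adjacent). -/

import Mathlib

def Dominates {V : Type*} (G : SimpleGraph V) (S : Finset V) : Prop :=
  ∀ u : V, u ∈ S ∨ ∃ v ∈ S, G.Adj v u

def IsIDS {V : Type*} (G : SimpleGraph V) (S : Finset V) : Prop :=
  Dominates G S ∧ ∃ v ∈ S, ∀ w ∈ S, ¬ G.Adj v w

def IsISDS {V : Type*} [DecidableEq V] (G : SimpleGraph V) (S : Finset V) : Prop :=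
  IsIDS G S ∧ ∀ u ∉ S, ∃ v ∈ S, G.Adj u v ∧ IsIDS G (insert u (S.erase v))

noncomputable def isdNum {V : Type*} [DecidableEq V] (G : SimpleGraph V) : ℕ :=
  sInf {n | ∃ S : Finset V, IsISDS G S ∧ S.card = n}

lemma singleton_isIDS {V : Type*} (G : SimpleGraph V) (v : V)
    (h : ∀ u : V, u ≠ v → G.Adj v u) : IsIDS G {v} := by
  constructor
  · intro u
    by_cases hu : u = v
    · left; simp [hu]
    · right; exact ⟨v, Finset.mem_singleton_self v, h u hu⟩
  · exact ⟨v, Finset.mem_singleton_self v, fun w hw => by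
      simp only [Finset.mem_singleton] at hw; rw [hw]; exact G.loopless.irrefl v⟩

/-- For a graph `G` on `n ≥ 1` vertices admitting an ISDS, `γ₀ₛ(G) = 1` iff `G` is complete. -/
theorem isdNum_eq_one_iff_complete {V : Type*} [Fintype V] [DecidableEq V]
    (G : SimpleGraph V) (hn : 1 ≤ Fintype.card V)
    (hex : ∃ S : Finset V, IsISDS G S) :
    isdNum G = 1 ↔ ∀ u v : V, u ≠ v → G.Adj u v := by
  constructor
  · intro h1 u v huv
    have hne : {n | ∃ S : Finset V, IsISDS G S ∧ S.card = n}.Nonempty := by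
      obtain ⟨S, hS⟩ := hex
      exact ⟨S.card, S, hS, rfl⟩
    have hmem := Nat.sInf_mem hne
    rw [show sInf {n | ∃ S : Finset V, IsISDS G S ∧ S.card = n} = isdNum G from rfl, h1] at hmem
    obtain ⟨S, hS, hcard⟩ := hmem
    obtain ⟨v₀, rfl⟩ := Finset.card_eq_one.mp hcard
    -- domination by {v₀}: every u ≠ v₀ is adjacent to v₀
    have hdom : ∀ w : V, w ≠ v₀ → G.Adj v₀ w := by
      intro w hw
      rcases hS.1.1 w with hw' | ⟨x, hx, hadj⟩
      · simp only [Finset.mem_singleton] at hw'; exact absurd hw' hw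
      · simp only [Finset.mem_singleton] at hx; subst hx; exact hadj
    by_cases hu : u = v₀
    · subst hu; exact hdom v huv.symm
    · have huS : u ∉ ({v₀} : Finset V) := by simp [hu]
      obtain ⟨x, hx, hadj, hIDS⟩ := hS.2 u huS
      simp only [Finset.mem_singleton] at hx
      rw [hx] at hIDS
      have he : insert u (({v₀} : Finset V).erase v₀) = {u} := by simp
      rw [he] at hIDS
      rcases hIDS.1 v with hv | ⟨y, hy, hadj'⟩
      · simp only [Finset.mem_singleton] at hv; exact absurd hv.symm huv
      · simp only [Finset.mem_singleton] at hy; rw [hy] at hadj'; exact hadj'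
  · intro hcomp
    obtain ⟨v₀⟩ := Fintype.card_pos_iff.mp hn
    have hISDS : IsISDS G ({v₀} : Finset V) := by
      refine ⟨singleton_isIDS G v₀ (fun u hu => hcomp v₀ u (Ne.symm hu)), ?_⟩
      intro u hu
      refine ⟨v₀, Finset.mem_singleton_self v₀, hcomp u v₀ (by simpa using hu), ?_⟩
      have : insert u (({v₀} : Finset V).erase v₀) = {u} := by simp
      rw [this]
      exact singleton_isIDS G u (fun w hw => hcomp u w (Ne.symm hw))
    have h1 : (1 : ℕ) ∈ {n | ∃ S : Finset V, IsISDS G S ∧ S.card = n} :=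
      ⟨{v₀}, hISDS, Finset.card_singleton v₀⟩
    refine le_antisymm (Nat.sInf_le h1) ?_
    rw [Nat.one_le_iff_ne_zero]
    intro h0
    have := Nat.sInf_eq_zero.mp h0
    rcases this with hmem | hempty
    · obtain ⟨S, hS, hc⟩ := hmem
      rw [Finset.card_eq_zero] at hc; subst hc
      obtain ⟨v, hv, -⟩ := hS.1.2
      exact absurd hv (Finset.notMem_empty v)
    · exact absurd h1 (hempty ▸ Set.notMem_empty 1)
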